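/- Let a < b be real numbers, let α, β : (a,b) → ℝ be differentiable with β(x) > 0 for all x ∈ (a,b), and let φ : (a,b) → ℝ be twice differentiable with φ(x) ≠ 0 for all x ∈ (a,b), satisfying φ″(x) + α(x)φ′(x) + β(x)φ(x) = 0 on (a,b). Suppose θ : (a,b) → ℝ is differentiable, cos(θ(x)) ≠ 0 for all x ∈ (a,b), and φ′(x)/φ(x) = √(β(x)) · tan(θ(x)) for all x ∈ (a,b). Then for all x ∈ (a,b), θ′(x) = −√(β(x)) − ( β′(x)/(4β(x)) + α(x)/2 ) · sin(2θ(x)). -/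

import Mathlib

open Real Set

theorem prufer_transform
    (a b : ℝ) (hab : a < b)
    (α β φ θ : ℝ → ℝ)
    (hα : ∀ x ∈ Set.Ioo a b, DifferentiableAt ℝ α x)
    (hβ : ∀ x ∈ Set.Ioo a b, DifferentiableAt ℝ β x)
    (hβpos : ∀ x ∈ Set.Ioo a b, 0 < β x)
    (hφ : ∀ x ∈ Set.Ioo a b, DifferentiableAt ℝ φ x)
    (hφ' : ∀ x ∈ Set.Ioo a b, DifferentiableAt ℝ (deriv φ) x)
    (hφne : ∀ x ∈ Set.Ioo a b, φ x ≠ 0)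
    (hode : ∀ x ∈ Set.Ioo a b,
      deriv (deriv φ) x + α x * deriv φ x + β x * φ x = 0)
    (hθ : ∀ x ∈ Set.Ioo a b, DifferentiableAt ℝ θ x)
    (hcos : ∀ x ∈ Set.Ioo a b, Real.cos (θ x) ≠ 0)
    (htan : ∀ x ∈ Set.Ioo a b,
      deriv φ x / φ x = Real.sqrt (β x) * Real.tan (θ x)) :
    ∀ x ∈ Set.Ioo a b,
      deriv θ x = -Real.sqrt (β x)
        - (deriv β x / (4 * β x) + α x / 2) * Real.sin (2 * θ x) := by
  intro x hx
  have hmem : Set.Ioo a b ∈ nhds x := isOpen_Ioo.mem_nhds hx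
  have hβx := hβpos x hx
  have hsqpos : 0 < Real.sqrt (β x) := Real.sqrt_pos.mpr hβx
  have hsqne : Real.sqrt (β x) ≠ 0 := hsqpos.ne'
  have hc := hcos x hx
  have hφx := hφne x hx
  have hφd := (hφ x hx).hasDerivAt
  have hφ'd := (hφ' x hx).hasDerivAt
  have hβd := (hβ x hx).hasDerivAt
  have hθd := (hθ x hx).hasDerivAt
  have hquot : HasDerivAt (fun y => deriv φ y / φ y)
      ((deriv (deriv φ) x * φ x - deriv φ x * deriv φ x) / (φ x)^2) x :=
    hφ'd.div hφd hφx
  have hsqrt : HasDerivAt (fun y => Real.sqrt (β y))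
      (deriv β x / (2 * Real.sqrt (β x))) x := hβd.sqrt hβx.ne'
  have htand : HasDerivAt (fun y => Real.tan (θ y))
      (1 / Real.cos (θ x) ^ 2 * deriv θ x) x :=
    (Real.hasDerivAt_tan hc).comp x hθd
  have hprod := hsqrt.mul htand
  have heq : (fun y => deriv φ y / φ y) =ᶠ[nhds x]
      (fun y => Real.sqrt (β y) * Real.tan (θ y)) :=
    Filter.eventuallyEq_of_mem hmem (fun y hy => htan y hy)
  have hprod' : HasDerivAt (fun y => deriv φ y / φ y)
      (deriv β x / (2 * Real.sqrt (β x)) * Real.tan (θ x)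
        + Real.sqrt (β x) * (1 / Real.cos (θ x) ^ 2 * deriv θ x)) x :=
    hprod.congr_of_eventuallyEq heq
  have E := hquot.unique hprod'
  have hphi' : deriv φ x = Real.sqrt (β x) * Real.tan (θ x) * φ x :=
    (div_eq_iff hφx).mp (htan x hx)
  have hode2 : deriv (deriv φ) x = -(α x * deriv φ x) - β x * φ x := by
    linarith [hode x hx]
  have hss : Real.sqrt (β x) * Real.sqrt (β x) = β x := Real.mul_self_sqrt hβx.le
  have hsc : Real.sin (θ x)^2 + Real.cos (θ x)^2 = 1 := Real.sin_sq_add_cos_sq _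
  rw [hode2, hphi'] at E
  rw [Real.tan_eq_sin_div_cos] at E
  have hQ : ((-(α x * (Real.sqrt (β x) * (Real.sin (θ x)/Real.cos (θ x)) * φ x)) - β x * φ x) * φ x
      - (Real.sqrt (β x) * (Real.sin (θ x)/Real.cos (θ x)) * φ x)
        * (Real.sqrt (β x) * (Real.sin (θ x)/Real.cos (θ x)) * φ x)) / (φ x)^2
      = -(α x * (Real.sqrt (β x) * (Real.sin (θ x)/Real.cos (θ x)))) - β x
        - (Real.sqrt (β x))^2 * (Real.sin (θ x)/Real.cos (θ x))^2 := by
    field_simp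
  rw [hQ] at E
  rw [Real.sin_two_mul]
  field_simp at E ⊢
  have hc4 : (Real.cos (θ x))^4 ≠ 0 := pow_ne_zero _ hc
  apply mul_left_cancel₀ hc4
  linear_combination (-2 * Real.cos (θ x)^4) * (E
    + (2 * α x * Real.sin (θ x) * Real.cos (θ x) + 2 * Real.sqrt (β x) * Real.sin (θ x)^2 + 2 * deriv θ x) * hss
    + (2 * β x * Real.sqrt (β x)) * hsc)
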